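/- Let k be an uncountable field and let R be a unital associative prime k-algebra with dim_k(R) ≤ ℵ₀ such that every nonzero two-sided ideal of R contains a nonzero idempotent. Then the following are equivalent: (i) the extended centroid of R is algebraic over k, in the concrete sense that for every nonzero two-sided ideal I of R and every k-linear map f : I → R satisfying f(r x) = r f(x) and f(x r) = f(x) r for all r ∈ R, x ∈ I, there exist n ≥ 1 and scalars c_0, …, c_n ∈ k, not all zero, with Σ_{i=0}^{n} c_i f^{i}(x_1 ⋯ x_n) = 0 for all x_1, …, x_n ∈ I; (iii) for each nonzero idempotent e of R, Z(eRe) is a field; (iv) each nonzero two-sided ideal of R contains a nonzero idempotent e such that Z(eRe) is a field. -/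

import Mathlib

/-- `e` is a nonzero idempotent-corner center condition: the center of the corner
ring `eRe` is a field (with identity `e` and inverses lying in the center). -/
def CornerCenterIsField {R : Type} [Ring R] (e : R) : Prop :=
  e ≠ 0 ∧
  ∀ z : R, e * z * e = z → (∀ w : R, e * w * e = w → z * w = w * z) → z ≠ 0 →
    ∃ y : R, e * y * e = y ∧ (∀ w : R, e * w * e = w → y * w = w * y) ∧
      z * y = e ∧ y * z = e


/-- The extended centroid of the prime ring `R` is algebraic over `k`, expressed
concretely: every `(R,R)`-bimodule homomorphism `f` from a nonzero two-sided ideal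
`I` to `R` (encoded as a function `R → R` which is `k`-linear and a bimodule map on
`I`; every such partial map extends to such a function) satisfies a nontrivial
polynomial relation over `k` on products of elements of `I`. -/
def ExtCentroidAlgebraic (k : Type) [Field k] (R : Type) [Ring R] [Algebra k R] : Prop :=
  ∀ I : TwoSidedIdeal R, I ≠ ⊥ →
    ∀ f : R → R,
      (∀ x ∈ I, ∀ y ∈ I, f (x + y) = f x + f y) →
      (∀ (c : k) (x : R), x ∈ I → f (c • x) = c • f x) →
      (∀ (r x : R), x ∈ I → f (r * x) = r * f x) →
      (∀ (r x : R), x ∈ I → f (x * r) = f x * r) →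
      ∃ (n : ℕ) (c : Fin (n + 1) → k), 1 ≤ n ∧ (∃ i, c i ≠ 0) ∧
        ∀ x : Fin n → R, (∀ j, x j ∈ I) →
          ∑ i : Fin (n + 1), c i • f^[(i : ℕ)] (List.ofFn x).prod = 0

open Polynomial in
lemma commute_aeval {k R : Type} [Field k] [Ring R] [Algebra k R]
    {w z : R} (h : Commute w z) (q : Polynomial k) : Commute w (aeval z q) := by
  induction q using Polynomial.induction_on' with
  | add p q hp hq => rw [map_add]; exact hp.add_right hq
  | monomial n a =>
      rw [Polynomial.aeval_monomial]
      exact Commute.mul_right ((Algebra.commutes a w).symm) (h.pow_right n)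

lemma corner_left {R : Type} [Ring R] {e z : R} (he : e * e = e) (hz : e * z * e = z) :
    e * z = z := by
  conv_lhs => rw [← hz]
  rw [← mul_assoc, ← mul_assoc, he, hz]

lemma corner_right {R : Type} [Ring R] {e z : R} (he : e * e = e) (hz : e * z * e = z) :
    z * e = z := by
  conv_lhs => rw [← hz]
  rw [mul_assoc, mul_assoc, he, ← mul_assoc, hz]

lemma corner_sandwich {R : Type} [Ring R] {e : R} (he : e * e = e) (x : R) :
    e * (e * x * e) * e = e * x * e := by
  simp only [mul_assoc]
  rw [he, ← mul_assoc e e, he]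

lemma sandwich_center {R : Type} [Ring R] {e z : R} (he : e * e = e) (hz : e * z * e = z)
    (hcen : ∀ w : R, e * w * e = w → z * w = w * z) (x u : R) (heu : e * u = u) :
    z * x * u = (e * x * e) * (z * u) := by
  calc z * x * u = (z * e) * x * (e * u) := by rw [corner_right he hz, heu]
    _ = z * ((e * x * e) * u) := by noncomm_ring
    _ = (z * (e * x * e)) * u := by noncomm_ring
    _ = ((e * x * e) * z) * u := by rw [hcen _ (corner_sandwich he x)]
    _ = (e * x * e) * (z * u) := by noncomm_ring

open Polynomial in
lemma inv_of_alg {k R : Type} [Field k] [Ring R] [Algebra k R]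
    (hprime : ∀ a b : R, (∀ x : R, a * x * b = 0) → a = 0 ∨ b = 0)
    {e z : R} (he0 : e ≠ 0) (he : e * e = e) (hz : e * z * e = z)
    (hcen : ∀ w : R, e * w * e = w → z * w = w * z) (hz0 : z ≠ 0)
    (halg : ∃ p : Polynomial k, p ≠ 0 ∧ aeval z p * e = 0) :
    ∃ y : R, e * y * e = y ∧ (∀ w : R, e * w * e = w → y * w = w * y) ∧
      z * y = e ∧ y * z = e := by
  have hez : e * z = z := corner_left he hz
  have hze : z * e = z := corner_right he hz
  have hcomez : Commute e z := show e * z = z * e by rw [hez, hze]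
  have hue : ∀ q : Polynomial k, (aeval z q * e) * e = aeval z q * e := by
    intro q; rw [mul_assoc, he]
  have heu : ∀ q : Polynomial k, e * (aeval z q * e) = aeval z q * e := by
    intro q
    have hcom : Commute e (aeval z q) := commute_aeval hcomez q
    rw [← mul_assoc, hcom.eq, mul_assoc, he]
  have hcorn : ∀ q : Polynomial k, e * (aeval z q * e) * e = aeval z q * e := by
    intro q; rw [heu q, hue q]
  have huz : ∀ q : Polynomial k, (aeval z q * e) * z = z * (aeval z q * e) := by
    intro q
    have hcom : Commute z (aeval z q) := commute_aeval (Commute.refl z) q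
    rw [mul_assoc, hez, ← hcom.eq, ← mul_assoc, hcom.eq, mul_assoc, hze]
  have hucen : ∀ q : Polynomial k, ∀ w : R, e * w * e = w →
      (aeval z q * e) * w = w * (aeval z q * e) := by
    intro q w hw
    have hcom : Commute w (aeval z q) := commute_aeval ((hcen w hw).symm) q
    rw [mul_assoc, corner_left he hw, ← hcom.eq, ← mul_assoc, hcom.eq,
      mul_assoc, corner_right he hw]
  suffices H : ∀ N : ℕ, ∀ p : Polynomial k, p.natDegree ≤ N → p ≠ 0 → aeval z p * e = 0 →
      ∃ y : R, e * y * e = y ∧ (∀ w : R, e * w * e = w → y * w = w * y) ∧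
        z * y = e ∧ y * z = e by
    obtain ⟨p, hp0, hpe⟩ := halg
    exact H p.natDegree p le_rfl hp0 hpe
  have key : ∀ p : Polynomial k, p.coeff 0 ≠ 0 → aeval z p * e = 0 →
      ∃ y : R, e * y * e = y ∧ (∀ w : R, e * w * e = w → y * w = w * y) ∧
        z * y = e ∧ y * z = e := by
    intro p hc0 hpe
    have h1 : (X : Polynomial k) * p.divX + C (p.coeff 0) = p := X_mul_divX_add p
    have h3 := congrArg (fun t : Polynomial k => aeval z t * e) h1
    simp only [map_add, map_mul, aeval_X, aeval_C] at h3
    rw [hpe] at h3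
    have hsplit : z * (aeval z p.divX * e) + (p.coeff 0) • e = 0 := by
      rw [add_mul, mul_assoc, ← Algebra.smul_def] at h3
      exact h3
    have hzu : z * (aeval z p.divX * e) = -((p.coeff 0) • e) :=
      eq_neg_of_add_eq_zero_left hsplit
    refine ⟨(-(p.coeff 0)⁻¹) • (aeval z p.divX * e), ?_, ?_, ?_, ?_⟩
    · rw [mul_smul_comm, smul_mul_assoc, hcorn]
    · intro w hw
      rw [smul_mul_assoc, mul_smul_comm, hucen _ w hw]
    · rw [mul_smul_comm, hzu, smul_neg, neg_smul, neg_neg, smul_smul,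
        inv_mul_cancel₀ hc0, one_smul]
    · rw [smul_mul_assoc, huz, hzu, smul_neg, neg_smul, neg_neg, smul_smul,
        inv_mul_cancel₀ hc0, one_smul]
  intro N
  induction N with
  | zero =>
      intro p hdeg hp0 hpe
      refine key p (fun h => hp0 ?_) hpe
      rw [Polynomial.eq_C_of_natDegree_eq_zero (Nat.le_zero.mp hdeg), h, map_zero]
  | succ N ih =>
      intro p hdeg hp0 hpe
      by_cases hc0 : p.coeff 0 = 0
      · have hX : (X : Polynomial k) * p.divX = p := by
          conv_rhs => rw [← X_mul_divX_add p]
          rw [hc0, map_zero, add_zero]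
        have hdvx0 : p.divX ≠ 0 := fun h => hp0 (by rw [← hX, h, mul_zero])
        have hzu : z * (aeval z p.divX * e) = 0 := by
          have h3 := congrArg (fun t : Polynomial k => aeval z t * e) hX
          simp only [map_mul, aeval_X] at h3
          rw [hpe] at h3
          rw [← mul_assoc]
          exact h3
        have hu0 : aeval z p.divX * e = 0 := by
          rcases hprime z (aeval z p.divX * e)
            (fun x => by rw [sandwich_center he hz hcen x _ (heu p.divX), hzu, mul_zero])
            with h | h
          · exact absurd h hz0
          · exact h
        refine ih p.divX ?_ hdvx0 hu0
        have := Polynomial.natDegree_divX_eq_natDegree_tsub_one (p := p)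
        omega
      · exact key p hc0 hpe

open Polynomial in
lemma alg_of_field {k R : Type} [Field k] [Ring R] [Algebra k R]
    (huncount : Cardinal.aleph0 < Cardinal.mk k)
    (hdim : Module.rank k R ≤ Cardinal.aleph0)
    {e : R} (he : e * e = e) (hfield : CornerCenterIsField e)
    {z : R} (hz : e * z * e = z) (hcen : ∀ w : R, e * w * e = w → z * w = w * z) :
    ∃ p : Polynomial k, p ≠ 0 ∧ aeval z p * e = 0 := by
  classical
  by_contra halg
  push_neg at halg
  have hze : z * e = z := corner_right he hz
  have hzeta_corner : ∀ lam : k, e * (z - lam • e) * e = z - lam • e := by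
    intro lam
    simp only [mul_sub, sub_mul, mul_smul_comm, smul_mul_assoc, he, hz]
  have hzeta_cen : ∀ lam : k, ∀ w : R, e * w * e = w →
      (z - lam • e) * w = w * (z - lam • e) := by
    intro lam w hw
    rw [sub_mul, mul_sub, hcen w hw, smul_mul_assoc, mul_smul_comm,
      corner_left he hw, corner_right he hw]
  have hzeta_ne : ∀ lam : k, z - lam • e ≠ 0 := by
    intro lam h0
    have hzl : z = lam • e := by rwa [sub_eq_zero] at h0
    apply halg (X - C lam) (X_sub_C_ne_zero lam)
    rw [map_sub, aeval_X, aeval_C, sub_mul, ← Algebra.smul_def, hze, ← hzl, sub_self]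
  have hinv := fun lam : k =>
    hfield.2 (z - lam • e) (hzeta_corner lam) (hzeta_cen lam) (hzeta_ne lam)
  choose w hw1 hw2 hw3 hw4 using hinv
  have hli : LinearIndependent k w := by
    rw [linearIndependent_iff']
    intro s g hsum lam0 hlam0
    set P : Polynomial k := ∏ mu ∈ s, (X - C mu) with hPdef
    have hgen : ∀ lam ∈ s, w lam * (aeval z P * e) =
        aeval z (∏ mu ∈ s.erase lam, (X - C mu)) * e := by
      intro lam hlam
      set Q : Polynomial k := ∏ mu ∈ s.erase lam, (X - C mu) with hQdef
      have hP : P = Q * (X - C lam) := by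
        rw [mul_comm]
        exact (Finset.mul_prod_erase s (fun mu => (X : Polynomial k) - C mu) hlam).symm
      have hcomQ : Commute (w lam) (aeval z Q) := commute_aeval (hw2 lam z hz) Q
      have step1 : aeval z P * e = aeval z Q * ((z - algebraMap k R lam) * e) := by
        rw [hP, map_mul, map_sub, aeval_X, aeval_C, mul_assoc]
      calc w lam * (aeval z P * e)
          = w lam * (aeval z Q * (z - lam • e)) := by
            rw [step1, sub_mul, ← Algebra.smul_def, hze]
        _ = aeval z Q * (w lam * (z - lam • e)) := by
            rw [← mul_assoc, hcomQ.eq, mul_assoc]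
        _ = aeval z Q * e := by rw [hw4 lam]
    set T : Polynomial k := ∑ lam ∈ s, C (g lam) * ∏ mu ∈ s.erase lam, (X - C mu)
      with hTdef
    have h0 : aeval z T * e = 0 := by
      have h1 := congrArg (fun t => t * (aeval z P * e)) hsum
      simp only [Finset.sum_mul, smul_mul_assoc, zero_mul] at h1
      calc aeval z T * e
          = ∑ lam ∈ s, g lam • (aeval z (∏ mu ∈ s.erase lam, (X - C mu)) * e) := by
            rw [hTdef, map_sum, Finset.sum_mul]
            refine Finset.sum_congr rfl fun lam _ => ?_
            rw [map_mul, aeval_C, mul_assoc, ← Algebra.smul_def]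
        _ = ∑ lam ∈ s, g lam • (w lam * (aeval z P * e)) :=
            Finset.sum_congr rfl fun lam hlam => by rw [hgen lam hlam]
        _ = 0 := h1
    by_cases hT : T = 0
    · have h2 : ∑ lam ∈ s, g lam * (∏ mu ∈ s.erase lam, (lam0 - mu)) = 0 := by
        have h3 := congrArg (Polynomial.eval lam0) hT
        rw [hTdef] at h3
        simpa [Polynomial.eval_finset_sum, Polynomial.eval_prod] using h3
      have hprodne : (∏ mu ∈ s.erase lam0, (lam0 - mu)) ≠ 0 :=
        Finset.prod_ne_zero_iff.mpr fun mu hmu =>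
          sub_ne_zero.mpr (Ne.symm (Finset.ne_of_mem_erase hmu))
      have hsing : ∑ lam ∈ s, g lam * (∏ mu ∈ s.erase lam, (lam0 - mu)) =
          g lam0 * (∏ mu ∈ s.erase lam0, (lam0 - mu)) :=
        Finset.sum_eq_single lam0
          (fun b hb hbne => by
            rw [Finset.prod_eq_zero (Finset.mem_erase.mpr ⟨Ne.symm hbne, hlam0⟩)
              (sub_self lam0), mul_zero])
          (fun h =>absurd hlam0 h)
      rw [hsing] at h2
      exact (mul_eq_zero.mp h2).resolve_right hprodne
    · exact absurd h0 (halg T hT)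
  have hcard := hli.cardinal_le_rank
  exact absurd (hcard.trans hdim) (not_le.mpr huncount)

lemma iter_decomp {R : Type} [Ring R] (I : TwoSidedIdeal R) (f : R → R)
    (hmulL : ∀ (r x : R), x ∈ I → f (r * x) = r * f x) :
    ∀ (i : ℕ) (l : List R), (∀ a ∈ l, a ∈ I) → i ≤ l.length →
      ∃ (l' : List R) (r : R), (∀ a ∈ l', a ∈ I) ∧ l'.length + i = l.length ∧
        f^[i] l.prod = l'.prod * r := by
  intro i
  induction i with
  | zero =>
      intro l hl _
      exact ⟨l, 1, hl, by simp, by simp⟩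
  | succ i ih =>
      intro l hl hi
      obtain ⟨l', r, hl', hlen, heq⟩ := ih l hl (Nat.le_of_succ_le hi)
      rcases List.eq_nil_or_concat l' with rfl | ⟨t, a, rfl⟩
      · simp at hlen; omega
      · have ha : a ∈ I := hl' a (by simp)
        have ht : ∀ b ∈ t, b ∈ I := fun b hb => hl' b (by simp [hb])
        have harg : (t.concat a).prod * r = t.prod * (a * r) := by
          rw [List.concat_eq_append, List.prod_append, List.prod_singleton, mul_assoc]
        refine ⟨t, f (a * r), ht, by simp at hlen ⊢; omega, ?_⟩
        rw [Function.iterate_succ_apply', heq, harg,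
          hmulL t.prod (a * r) (I.mul_mem_right a r ha)]

lemma iter_mem {R : Type} [Ring R] (I : TwoSidedIdeal R) (f : R → R)
    (hmulL : ∀ (r x : R), x ∈ I → f (r * x) = r * f x)
    (i : ℕ) (l : List R) (hl : ∀ a ∈ l, a ∈ I) (hi : i < l.length) :
    f^[i] l.prod ∈ I := by
  obtain ⟨l', r, hl', hlen, heq⟩ := iter_decomp I f hmulL i l hl (Nat.le_of_lt hi)
  rcases l' with _ | ⟨a, t⟩
  · simp at hlen; omega
  · rw [heq, List.prod_cons, mul_assoc]
    exact I.mul_mem_right a _ (hl' a (by simp))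

open Polynomial in
lemma extalg_of_good {k R : Type} [Field k] [Ring R] [Algebra k R]
    (huncount : Cardinal.aleph0 < Cardinal.mk k)
    (hprime : ∀ a b : R, (∀ x : R, a * x * b = 0) → a = 0 ∨ b = 0)
    (hdim : Module.rank k R ≤ Cardinal.aleph0)
    (hgood : ∀ I : TwoSidedIdeal R, I ≠ ⊥ →
      ∃ e : R, e ∈ I ∧ e * e = e ∧ CornerCenterIsField e) :
    ExtCentroidAlgebraic k R := by
  intro I hI f hadd hsmul hmulL hmulR
  obtain ⟨e, heI, he, hfield⟩ := hgood I hI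
  have he0 : e ≠ 0 := hfield.1
  have hz_e : f e * e = f e := by
    have h := hmulR e e heI
    rw [he] at h
    exact h.symm
  have he_z : e * f e = f e := by
    have h := hmulL e e heI
    rw [he] at h
    exact h.symm
  have hzcorner : e * f e * e = f e := by rw [he_z, hz_e]
  have hF1 : ∀ a ∈ I, ∀ b ∈ I, f a * b = a * f b := by
    intro a ha b hb
    have h1 := hmulR b a ha
    have h2 := hmulL a b hb
    rw [← h1, h2]
  have hxe : ∀ x : R, f e * (x * e) = (e * x) * f e := by
    intro x
    have q1 := hmulR (x * e) e heI
    have q2 := hmulL (e * x) e heI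
    rw [show e * (x * e) = (e * x) * e by rw [mul_assoc]] at q1
    exact q1.symm.trans q2
  have hzcen : ∀ w : R, e * w * e = w → f e * w = w * f e := by
    intro w hw
    have hid := hxe (e * w)
    rw [corner_left he hw, corner_left he hw, corner_right he hw] at hid
    exact hid
  obtain ⟨p, hp0, hpe⟩ := alg_of_field huncount hdim he hfield hzcorner hzcen
  set z := f e with hzdef
  refine ⟨max p.natDegree 1, fun i => p.coeff i, le_max_right _ _,
    ⟨⟨p.natDegree, Nat.lt_succ_of_le (le_max_left _ _)⟩, ?_⟩, ?_⟩
  · show p.coeff p.natDegree ≠ 0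
    exact mt Polynomial.leadingCoeff_eq_zero.mp hp0
  set n := max p.natDegree 1 with hn
  intro x hx
  set l : List R := List.ofFn x with hldef
  have hlmem : ∀ a ∈ l, a ∈ I := by
    rw [hldef]
    intro a halist
    obtain ⟨j, rfl⟩ := List.mem_ofFn.mp halist
    exact hx j
  have hllen : l.length = n := by rw [hldef, List.length_ofFn]
  set w := l.prod with hwdef
  have hgmem : ∀ j : ℕ, z ^ j * e ∈ I := fun j => I.mul_mem_left _ _ heI
  have hfg : ∀ j : ℕ, f (z ^ j * e) = z ^ (j + 1) * e := by
    intro j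
    have h1 : f (z ^ j * e) = f (z ^ j * e) * e := by
      conv_lhs => rw [show z ^ j * e = (z ^ j * e) * e by rw [mul_assoc, he]]
      rw [hmulR e (z ^ j * e) (hgmem j)]
    have h2 : f (z ^ j * e) * e = (z ^ j * e) * z := hF1 _ (hgmem j) _ heI
    calc f (z ^ j * e) = (z ^ j * e) * z := by rw [h1, h2]
      _ = z ^ j * z := by rw [mul_assoc, corner_left he hzcorner]
      _ = z ^ (j + 1) * e := by
          rw [← pow_succ, show z ^ (j+1) * e = z ^ j * (z * e) by
            rw [← mul_assoc, ← pow_succ], corner_right he hzcorner, pow_succ]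
  have hmem : ∀ i < n, f^[i] w ∈ I := by
    intro i hi
    exact iter_mem I f hmulL i l hlmem (by omega)
  have hchain : ∀ i ≤ n, ∀ (j : ℕ) (x' : R),
      f^[i] w * (x' * (z ^ j * e)) = w * (x' * (z ^ (i + j) * e)) := by
    intro i
    induction i with
    | zero =>
        intro _ j x'
        rw [Function.iterate_zero_apply, Nat.zero_add]
    | succ i ih =>
        intro hi j x'
        have hiI : f^[i] w ∈ I := hmem i (by omega)
        have hb : x' * (z ^ j * e) ∈ I := I.mul_mem_left _ _ (hgmem j)
        rw [Function.iterate_succ_apply', hF1 _ hiI _ hb,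
          hmulL x' _ (hgmem j), hfg j, ih (by omega) (j + 1) x',
          show i + (j + 1) = i + 1 + j by omega]
  have hsumz : ∑ i : Fin (n + 1), p.coeff i • (z ^ (i : ℕ) * e) = 0 := by
    have ha : aeval z p = ∑ i ∈ Finset.range (n + 1), p.coeff i • z ^ i :=
      Polynomial.aeval_eq_sum_range' (p := p) (n := n + 1)
        (Nat.lt_succ_of_le (le_max_left _ _)) z
    calc ∑ i : Fin (n + 1), p.coeff i • (z ^ (i : ℕ) * e)
        = ∑ i ∈ Finset.range (n + 1), p.coeff i • (z ^ i * e) :=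
          Fin.sum_univ_eq_sum_range (fun i => p.coeff i • (z ^ i * e)) (n + 1)
      _ = (∑ i ∈ Finset.range (n + 1), p.coeff i • z ^ i) * e := by
          rw [Finset.sum_mul]
          exact Finset.sum_congr rfl fun i _ => by rw [smul_mul_assoc]
      _ = aeval z p * e := by rw [ha]
      _ = 0 := hpe
  have hv : ∀ x' : R,
      (∑ i : Fin (n + 1), p.coeff i • f^[(i : ℕ)] w) * x' * e = 0 := by
    intro x'
    calc (∑ i : Fin (n + 1), p.coeff i • f^[(i : ℕ)] w) * x' * e
        = ∑ i : Fin (n + 1), p.coeff i • (f^[(i : ℕ)] w * (x' * (z ^ 0 * e))) := by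
          rw [Finset.sum_mul, Finset.sum_mul]
          exact Finset.sum_congr rfl fun i _ => by
            rw [smul_mul_assoc, smul_mul_assoc, pow_zero, one_mul, mul_assoc]
      _ = ∑ i : Fin (n + 1), p.coeff i • (w * (x' * (z ^ ((i : ℕ) + 0) * e))) :=
          Finset.sum_congr rfl fun i _ => by rw [hchain (i : ℕ) i.is_le 0 x']
      _ = 0 := by
          have hterm : ∀ i : Fin (n + 1),
              p.coeff i • (w * (x' * (z ^ ((i : ℕ) + 0) * e))) =
                w * (x' * (p.coeff i • (z ^ (i : ℕ) * e))) := fun i => by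
            simp only [Nat.add_zero, mul_smul_comm]
          rw [Finset.sum_congr rfl (fun i _ => hterm i), ← Finset.mul_sum,
            ← Finset.mul_sum, hsumz, mul_zero, mul_zero]
  rcases hprime _ e hv with h | h
  · exact h
  · exact absurd h he0

open Polynomial in
lemma good_of_extalg {k R : Type} [Field k] [Ring R] [Algebra k R]
    (hprime : ∀ a b : R, (∀ x : R, a * x * b = 0) → a = 0 ∨ b = 0)
    (halg : ExtCentroidAlgebraic k R) :
    ∀ e : R, e ≠ 0 → e * e = e → CornerCenterIsField e := by
  intro e he0 he
  refine ⟨he0, ?_⟩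
  intro z hz hcen hz0
  classical
  have hez : e * z = z := corner_left he hz
  have hze : z * e = z := corner_right he hz
  set se : List (R × R) → R := fun l => (l.map fun q => q.1 * e * q.2).sum with hse
  set sz : List (R × R) → R := fun l => (l.map fun q => q.1 * z * q.2).sum with hsz
  have hkey : ∀ a b x : R, (a * z * b) * x * z = (a * e * b) * (x * (z * z)) := by
    intro a b x
    have h2 : z * (e * (b * x) * e) * z = (z * e) * (b * x) * (e * z) := by noncomm_ring
    rw [hze, hez] at h2
    have h1 : z * (b * x) * z = (e * (b * x) * e) * (z * z) := by
      rw [← h2, hcen _ (corner_sandwich he (b * x)), mul_assoc]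
    calc (a * z * b) * x * z = a * (z * (b * x) * z) := by noncomm_ring
      _ = a * ((e * (b * x) * e) * (z * z)) := by rw [h1]
      _ = (a * e * b) * (x * (e * (z * z))) := by noncomm_ring
      _ = (a * e * b) * (x * (z * z)) := by
          rw [show e * (z * z) = z * z from by rw [← mul_assoc, hez]]
  have hsum_mul : ∀ (l : List (R × R)) (x : R), sz l * x * z = se l * (x * (z * z)) := by
    intro l
    induction l with
    | nil => intro x; simp [hse, hsz]
    | cons q t ih =>
        intro x
        simp only [hse, hsz, List.map_cons, List.sum_cons] at *
        rw [add_mul, add_mul, add_mul, ih x, hkey q.1 q.2 x]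
  have hwelldef : ∀ l : List (R × R), se l = 0 → sz l = 0 := by
    intro l h0
    rcases hprime (sz l) z (fun x => by rw [hsum_mul l x, h0, zero_mul]) with h | h
    · exact h
    · exact absurd h hz0
  have hse_append : ∀ l1 l2, se (l1 ++ l2) = se l1 + se l2 := by
    intro l1 l2; simp [hse]
  have hsz_append : ∀ l1 l2, sz (l1 ++ l2) = sz l1 + sz l2 := by
    intro l1 l2; simp [hsz]
  have hse_neg : ∀ l, se (l.map fun q => (-q.1, q.2)) = -se l := by
    intro l
    induction l with
    | nil => simp [hse]
    | cons q t ih =>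
        simp only [hse, List.map_cons, List.sum_cons] at *
        rw [ih, neg_mul, neg_mul, neg_add]
  have hsz_neg : ∀ l, sz (l.map fun q => (-q.1, q.2)) = -sz l := by
    intro l
    induction l with
    | nil => simp [hsz]
    | cons q t ih =>
        simp only [hsz, List.map_cons, List.sum_cons] at *
        rw [ih, neg_mul, neg_mul, neg_add]
  have hse_lmul : ∀ (r : R) (l), se (l.map fun q => (r * q.1, q.2)) = r * se l := by
    intro r l
    induction l with
    | nil => simp [hse]
    | cons q t ih =>
        simp only [hse, List.map_cons, List.sum_cons] at *
        rw [ih, mul_add, mul_assoc, mul_assoc, mul_assoc]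
  have hsz_lmul : ∀ (r : R) (l), sz (l.map fun q => (r * q.1, q.2)) = r * sz l := by
    intro r l
    induction l with
    | nil => simp [hsz]
    | cons q t ih =>
        simp only [hsz, List.map_cons, List.sum_cons] at *
        rw [ih, mul_add, mul_assoc, mul_assoc, mul_assoc]
  have hse_rmul : ∀ (r : R) (l), se (l.map fun q => (q.1, q.2 * r)) = se l * r := by
    intro r l
    induction l with
    | nil => simp [hse]
    | cons q t ih =>
        simp only [hse, List.map_cons, List.sum_cons] at *
        rw [ih]; noncomm_ring
  have hsz_rmul : ∀ (r : R) (l), sz (l.map fun q => (q.1, q.2 * r)) = sz l * r := by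
    intro r l
    induction l with
    | nil => simp [hsz]
    | cons q t ih =>
        simp only [hsz, List.map_cons, List.sum_cons] at *
        rw [ih]; noncomm_ring
  have hse_smul : ∀ (c : k) (l), se (l.map fun q => (c • q.1, q.2)) = c • se l := by
    intro c l
    induction l with
    | nil => simp [hse]
    | cons q t ih =>
        simp only [hse, List.map_cons, List.sum_cons] at *
        rw [ih, smul_add, smul_mul_assoc, smul_mul_assoc]
  have hsz_smul : ∀ (c : k) (l), sz (l.map fun q => (c • q.1, q.2)) = c • sz l := by
    intro c l
    induction l with
    | nil => simp [hsz]
    | cons q t ih =>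
        simp only [hsz, List.map_cons, List.sum_cons] at *
        rw [ih, smul_add, smul_mul_assoc, smul_mul_assoc]
  -- the two-sided ideal ReR
  set I : TwoSidedIdeal R := TwoSidedIdeal.mk' {v | ∃ l : List (R × R), se l = v}
    ⟨[], by simp [hse]⟩
    (fun {x y} hx hy => by
      obtain ⟨l1, h1⟩ := hx; obtain ⟨l2, h2⟩ := hy
      exact ⟨l1 ++ l2, by rw [hse_append, h1, h2]⟩)
    (fun {x} hx => by
      obtain ⟨l, h⟩ := hx
      exact ⟨l.map fun q => (-q.1, q.2), by rw [hse_neg, h]⟩)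
    (fun {x y} hy => by
      obtain ⟨l, h⟩ := hy
      exact ⟨l.map fun q => (x * q.1, q.2), by rw [hse_lmul, h]⟩)
    (fun {x y} hx => by
      obtain ⟨l, h⟩ := hx
      exact ⟨l.map fun q => (q.1, q.2 * y), by rw [hse_rmul, h]⟩) with hI
  have hmemI : ∀ v : R, v ∈ I ↔ ∃ l : List (R × R), se l = v := by
    intro v
    rw [hI]
    exact TwoSidedIdeal.mem_mk' _ _ _ _ _ _ v
  have heI : e ∈ I := (hmemI e).mpr ⟨[(1, 1)], by simp [hse]⟩
  have hIne : I ≠ ⊥ := by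
    intro h
    rw [h, TwoSidedIdeal.mem_bot] at heI
    exact he0 heI
  -- the centroid-type map
  set f : R → R := fun v =>
    if h : ∃ l : List (R × R), se l = v then sz h.choose else 0 with hf
  have hfeval : ∀ l : List (R × R), f (se l) = sz l := by
    intro l
    have hex : ∃ l', se l' = se l := ⟨l, rfl⟩
    have h1 : f (se l) = sz hex.choose := dif_pos hex
    have hch : se hex.choose = se l := hex.choose_spec
    have hdiff : se (hex.choose ++ l.map fun q => (-q.1, q.2)) = 0 := by
      rw [hse_append, hse_neg, hch, add_neg_cancel]
    have h2 := hwelldef _ hdiff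
    rw [hsz_append, hsz_neg] at h2
    rw [h1, ← sub_eq_zero]
    rw [sub_eq_add_neg]
    exact h2
  have hadd : ∀ x ∈ I, ∀ y ∈ I, f (x + y) = f x + f y := by
    intro x hx y hy
    obtain ⟨l1, h1⟩ := (hmemI x).mp hx
    obtain ⟨l2, h2⟩ := (hmemI y).mp hy
    rw [← h1, ← h2, ← hse_append, hfeval, hfeval, hfeval, hsz_append]
  have hsmulf : ∀ (c : k) (x : R), x ∈ I → f (c • x) = c • f x := by
    intro c x hx
    obtain ⟨l, h⟩ := (hmemI x).mp hx
    rw [← h, ← hse_smul, hfeval, hfeval, hsz_smul]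
  have hmulL : ∀ (r x : R), x ∈ I → f (r * x) = r * f x := by
    intro r x hx
    obtain ⟨l, h⟩ := (hmemI x).mp hx
    rw [← h, ← hse_lmul, hfeval, hfeval, hsz_lmul]
  have hmulR : ∀ (r x : R), x ∈ I → f (x * r) = f x * r := by
    intro r x hx
    obtain ⟨l, h⟩ := (hmemI x).mp hx
    rw [← h, ← hse_rmul, hfeval, hfeval, hsz_rmul]
  obtain ⟨n, c, hn1, ⟨i0, hi0⟩, hrel⟩ := halg I hIne f hadd hsmulf hmulL hmulR
  -- iterates of f at e are powers of z
  have hiter : ∀ i : ℕ, f^[i] e = z ^ i * e := by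
    intro i
    induction i with
    | zero => rw [Function.iterate_zero_apply, pow_zero, one_mul]
    | succ i ih =>
        have hrep : z ^ i * e = se [(z ^ i, 1)] := by simp [hse]
        rw [Function.iterate_succ_apply', ih, hrep, hfeval]
        have : sz [(z ^ i, 1)] = z ^ i * z := by simp [hsz]
        rw [this, ← pow_succ]
        rw [show z ^ (i + 1) * e = z ^ i * (z * e) from by rw [← mul_assoc, ← pow_succ],
          hze, pow_succ]
  have hpow : ∀ m : ℕ, e ^ (m + 1) = e := by
    intro m
    induction m with
    | zero => exact pow_one e
    | succ m ihm => rw [pow_succ, ihm, he]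
  have hprodE : (List.ofFn fun _ : Fin n => e).prod = e := by
    rw [List.ofFn_const, List.prod_replicate]
    rcases n with _ | m
    · omega
    · exact hpow m
  have hfin : ∑ i : Fin (n + 1), c i • (z ^ (i : ℕ) * e) = 0 := by
    have h := hrel (fun _ => e) (fun _ => heI)
    rw [hprodE] at h
    calc ∑ i : Fin (n + 1), c i • (z ^ (i : ℕ) * e)
        = ∑ i : Fin (n + 1), c i • f^[(i : ℕ)] e :=
          Finset.sum_congr rfl fun i _ => by rw [hiter]
      _ = 0 := h
  -- build the polynomial
  set p : Polynomial k := ∑ i : Fin (n + 1), C (c i) * X ^ (i : ℕ) with hp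
  have hpcoeff : ∀ m : Fin (n + 1), p.coeff (m : ℕ) = c m := by
    intro m
    rw [hp, Polynomial.finset_sum_coeff]
    rw [Finset.sum_eq_single m
      (fun i _ hne => by
        rw [Polynomial.coeff_C_mul_X_pow]
        exact if_neg (fun hval => hne (Fin.val_injective hval).symm)
      ) (fun h => absurd (Finset.mem_univ m) h)]
    rw [Polynomial.coeff_C_mul_X_pow, if_pos rfl]
  have hp0 : p ≠ 0 := by
    intro h
    apply hi0
    rw [← hpcoeff i0, h, Polynomial.coeff_zero]
  have hpe : aeval z p * e = 0 := by
    have : aeval z p = ∑ i : Fin (n + 1), c i • z ^ (i : ℕ) := by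
      rw [hp, map_sum]
      exact Finset.sum_congr rfl fun i _ => by
        rw [map_mul, aeval_C, map_pow, aeval_X, Algebra.smul_def]
    rw [this, Finset.sum_mul]
    rw [show ∑ i : Fin (n + 1), (c i • z ^ (i : ℕ)) * e
        = ∑ i : Fin (n + 1), c i • (z ^ (i : ℕ) * e) from
      Finset.sum_congr rfl fun i _ => by rw [smul_mul_assoc]]
    exact hfin
  exact inv_of_alg hprime he0 he hz hcen hz0 ⟨p, hp0, hpe⟩

/-- For an uncountable field `k` and a prime countable-dimensional
`k`-algebra `R` in which every nonzero two-sided ideal contains a nonzero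
idempotent, the following are equivalent: (i) the extended centroid of `R` is
algebraic over `k`; (iii) `Z(eRe)` is a field for every nonzero idempotent `e`;
(iv) every nonzero two-sided ideal contains a nonzero idempotent `e` with
`Z(eRe)` a field. -/
theorem equivalences_for_prime_countable_dim
    (k : Type) [Field k] (R : Type) [Ring R] [Algebra k R]
    (huncount : Cardinal.aleph0 < Cardinal.mk k)
    (hprime : ∀ a b : R, (∀ x : R, a * x * b = 0) → a = 0 ∨ b = 0)
    (hdim : Module.rank k R ≤ Cardinal.aleph0)
    (hidem : ∀ I : TwoSidedIdeal R, I ≠ ⊥ → ∃ e : R, e ∈ I ∧ e ≠ 0 ∧ e * e = e) :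
    (ExtCentroidAlgebraic k R ↔
      (∀ e : R, e ≠ 0 → e * e = e → CornerCenterIsField e)) ∧
    ((∀ e : R, e ≠ 0 → e * e = e → CornerCenterIsField e) ↔
      (∀ I : TwoSidedIdeal R, I ≠ ⊥ →
        ∃ e : R, e ∈ I ∧ e * e = e ∧ CornerCenterIsField e)) := by
  have hBA : ExtCentroidAlgebraic k R →
      ∀ e : R, e ≠ 0 → e * e = e → CornerCenterIsField e :=
    fun hA => good_of_extalg hprime hA
  have hCB : (∀ e : R, e ≠ 0 → e * e = e → CornerCenterIsField e) →
      ∀ I : TwoSidedIdeal R, I ≠ ⊥ →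
        ∃ e : R, e ∈ I ∧ e * e = e ∧ CornerCenterIsField e := by
    intro hB I hI
    obtain ⟨e, heI, he0, he⟩ := hidem I hI
    exact ⟨e, heI, he, hB e he0 he⟩
  have hAC : (∀ I : TwoSidedIdeal R, I ≠ ⊥ →
      ∃ e : R, e ∈ I ∧ e * e = e ∧ CornerCenterIsField e) →
      ExtCentroidAlgebraic k R :=
    fun hC => extalg_of_good huncount hprime hdim hC
  exact ⟨⟨hBA, fun hB => hAC (hCB hB)⟩,
    ⟨hCB, fun hC e he0 he => hBA (hAC hC) e he0 he⟩⟩
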